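/- In the Mussa–Rosen model with the fixed-market-share collusive scheme, the bottom firm 1 satisfies π_1^d = (p_1^d − c_1)²/(v_2 − v_1) with p_1^d = p̂_1(p_2^c), π_1^* = (p_1^* − c_1)²/(v_2 − v_1), and π_1^c = (p_1^c − c_1)(p_1^* − c_1)/(v_2 − v_1); consequently, if Δ = p_1^c − p_1^* > 0 and p_1^* − c_1 > 0, its critical discount factor equals δ̄_1 = (π_1^d − π_1^c)/(π_1^d − π_1^*) = ((1/4)Δ)/((1/4)Δ + (p_1^* − c_1)). -/

import Mathlib

/-- Mussa–Rosen model with the fixed-market-share collusive scheme: the bottom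
firm satisfies `π_1^d = (p_1^d−c_1)²/(v_2−v_1)`, `π_1^* = (p_1^*−c_1)²/(v_2−v_1)`
and `π_1^c = (p_1^c−c_1)(p_1^*−c_1)/(v_2−v_1)`; consequently, with `Δ > 0` and a
positive margin, its critical discount factor equals
`((1/4)Δ)/((1/4)Δ + (p_1^*−c_1))`. -/
theorem bottom_firm_critical_discount_factor
    (v1 v2 c1 θlo p1Star p2Star Δ pd πd πc πst : ℝ)
    (hv0 : 0 < v1) (hv : v1 < v2) (hθ : 0 < θlo)
    (hΔ : 0 < Δ) (hm : 0 < p1Star - c1)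
    (hnash : p1Star = (1/2) * (p2Star + c1 - θlo * (v2 - v1)))
    (hpd : pd = (1/2) * ((p2Star + Δ) + c1 - θlo * (v2 - v1)))
    (hπd : πd = (pd - c1) * (((p2Star + Δ) - pd) / (v2 - v1) - θlo))
    (hπc : πc = ((p1Star + Δ) - c1) * (((p2Star + Δ) - (p1Star + Δ)) / (v2 - v1) - θlo))
    (hπst : πst = (p1Star - c1) * ((p2Star - p1Star) / (v2 - v1) - θlo)) :
    πd = (pd - c1) ^ 2 / (v2 - v1)
    ∧ πst = (p1Star - c1) ^ 2 / (v2 - v1)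
    ∧ πc = ((p1Star + Δ) - c1) * (p1Star - c1) / (v2 - v1)
    ∧ (πd - πc) / (πd - πst) = ((1/4) * Δ) / ((1/4) * Δ + (p1Star - c1)) := by
  have hV : (0:ℝ) < v2 - v1 := by linarith
  have hVne : v2 - v1 ≠ 0 := ne_of_gt hV
  have hp2 : p2Star = 2 * p1Star - c1 + θlo * (v2 - v1) := by linarith
  subst hp2 hpd hπd hπc hπst
  refine ⟨?_, ?_, ?_, ?_⟩
  · field_simp; ring
  · field_simp; ring
  · field_simp; ring
  · have hnum : (1/2 * ((2 * p1Star - c1 + θlo * (v2 - v1) + Δ) + c1 - θlo * (v2 - v1)) - c1) *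
        (((2 * p1Star - c1 + θlo * (v2 - v1) + Δ) -
          1/2 * ((2 * p1Star - c1 + θlo * (v2 - v1) + Δ) + c1 - θlo * (v2 - v1))) / (v2 - v1) - θlo)
        - ((p1Star + Δ) - c1) * (((2 * p1Star - c1 + θlo * (v2 - v1) + Δ) - (p1Star + Δ)) / (v2 - v1) - θlo)
        = Δ ^ 2 / (4 * (v2 - v1)) := by field_simp; ring
    have hden : (1/2 * ((2 * p1Star - c1 + θlo * (v2 - v1) + Δ) + c1 - θlo * (v2 - v1)) - c1) *
        (((2 * p1Star - c1 + θlo * (v2 - v1) + Δ) -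
          1/2 * ((2 * p1Star - c1 + θlo * (v2 - v1) + Δ) + c1 - θlo * (v2 - v1))) / (v2 - v1) - θlo)
        - (p1Star - c1) * (((2 * p1Star - c1 + θlo * (v2 - v1)) - p1Star) / (v2 - v1) - θlo)
        = Δ * (1/4 * Δ + (p1Star - c1)) / (v2 - v1) := by field_simp; ring
    rw [hnum, hden]
    have hx : (0:ℝ) < 1/4 * Δ + (p1Star - c1) := by linarith
    rw [div_div_div_comm, mul_div_assoc, div_self hVne, mul_one, div_div,
      div_eq_div_iff (by positivity) (ne_of_gt hx)]
    ring
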